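/- The sequential sampling procedure that, for i = n down to 1, samples Z_i = 1 with probability P(Σ_{m=1}^{i-1} Z_m = j−1)·p_i / P(Σ_{m=1}^{i} Z_m = j) (where j is the number of ones remaining to be placed among Z_1,...,Z_i) produces samples distributed exactly according to the conditional distribution p(z | Σ_i z_i = k). -/

import Mathlib

open Finset

/-- Weight of an assignment `z` under independent Bernoulli variables with parameters `p`. -/
noncomputable def W {n : ℕ} (p : Fin n → ℝ) (z : Fin n → Bool) : ℝ :=
  ∏ i, if z i then p i else 1 - p i

open scoped Classical in
/-- Probability of the event `E` under independent Bernoulli variables with parameters `p`. -/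
noncomputable def Pr {n : ℕ} (p : Fin n → ℝ) (E : (Fin n → Bool) → Prop) : ℝ :=
  ∑ z : Fin n → Bool, if E z then W p z else 0

/-- Number of ones in `z`. -/
def cnt {n : ℕ} (z : Fin n → Bool) : ℕ := (Finset.univ.filter fun i => z i = true).card

/-- The number of ones remaining to be placed among `Z_1,…,Z_i` when the target vector is `z`:
`j_i = #{m ≤ i : z_m = 1}`. -/
def rem {n : ℕ} (z : Fin n → Bool) (i : Fin n) : ℕ :=
  (Finset.univ.filter fun m => m ≤ i ∧ z m = true).card

lemma W_pos {n : ℕ} (p : Fin n → ℝ) (hp : ∀ i, 0 < p i ∧ p i < 1) (w : Fin n → Bool) :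
    0 < W p w := by
  unfold W
  apply Finset.prod_pos
  intro i _
  by_cases h : w i
  · simp [h, (hp i).1]
  · simp [h]; linarith [(hp i).2]

lemma Pr_congr {n : ℕ} (p : Fin n → ℝ) {E F : (Fin n → Bool) → Prop}
    (h : ∀ w, E w ↔ F w) : Pr p E = Pr p F := by
  have : E = F := funext fun w => propext (h w)
  rw [this]

lemma Pr_true {n : ℕ} (p : Fin n → ℝ) : Pr p (fun _ => True) = 1 := by
  classical
  unfold Pr W
  simp only [if_true]
  rw [← Fintype.prod_sum (fun i (b : Bool) => if b then p i else 1 - p i)]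
  simp

noncomputable def Cf {n : ℕ} (p : Fin n → ℝ) (z : Fin n → Bool) (j : ℕ) : ℝ :=
  Pr p (fun w => (Finset.univ.filter fun m : Fin n => m.val < j ∧ w m = true).card
               = (Finset.univ.filter fun m : Fin n => m.val < j ∧ z m = true).card)

lemma Cf_zero {n : ℕ} (p : Fin n → ℝ) (z : Fin n → Bool) : Cf p z 0 = 1 := by
  rw [show Cf p z 0 = Pr p (fun _ => True) from Pr_congr p (by simp), Pr_true]

lemma Cf_pos {n : ℕ} (p : Fin n → ℝ) (hp : ∀ i, 0 < p i ∧ p i < 1) (z : Fin n → Bool)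
    (j : ℕ) : 0 < Cf p z j := by
  classical
  unfold Cf Pr
  apply Finset.sum_pos'
  · intro w _
    split
    · exact le_of_lt (W_pos p hp w)
    · exact le_refl 0
  · exact ⟨z, Finset.mem_univ z, by simp [W_pos p hp z]⟩

lemma Cf_top {n k : ℕ} (p : Fin n → ℝ) (z : Fin n → Bool) (hz : cnt z = k) :
    Cf p z n = Pr p (fun w => cnt w = k) := by
  apply Pr_congr
  intro w
  have e : ∀ v : Fin n → Bool,
      (Finset.univ.filter fun m : Fin n => m.val < n ∧ v m = true).card = cnt v := by
    intro v
    unfold cnt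
    congr 1
    apply Finset.filter_congr
    intro m _
    simp [m.isLt]
  rw [e w, e z, hz]

lemma telescope (f q : ℕ → ℝ) :
    ∀ n : ℕ, (∀ j ≤ n, f j ≠ 0) →
      (∏ i ∈ Finset.range n, (f i * q i / f (i + 1))) =
        (∏ i ∈ Finset.range n, q i) * f 0 / f n := by
  intro n
  induction n with
  | zero => intro h; simp [div_self (h 0 le_rfl)]
  | succ n ih =>
    intro h
    rw [Finset.prod_range_succ, Finset.prod_range_succ,
      ih (fun j hj => h j (le_trans hj (Nat.le_succ n)))]
    have h1 : f n ≠ 0 := h n (Nat.le_succ n)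
    have h2 : f (n + 1) ≠ 0 := h (n + 1) le_rfl
    field_simp

/-- Correctness of sequential sampling: the product of the step-wise sampling probabilities
(`P(Σ_{m<i} Z_m = j−1)·p_i / P(Σ_{m≤i} Z_m = j)` for a one, its complement for a zero)
equals the `k`-subset conditional probability of the sampled vector `z`. -/
theorem stmt5 (n k : ℕ) (p : Fin n → ℝ) (hp : ∀ i, 0 < p i ∧ p i < 1)
    (z : Fin n → Bool) (hz : cnt z = k) :
    (∏ i : Fin n,
      if z i = true then
        Pr p (fun w => (Finset.univ.filter fun m => m < i ∧ w m = true).card = rem z i - 1)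
          * p i /
        Pr p (fun w => (Finset.univ.filter fun m => m ≤ i ∧ w m = true).card = rem z i)
      else
        Pr p (fun w => (Finset.univ.filter fun m => m < i ∧ w m = true).card = rem z i)
          * (1 - p i) /
        Pr p (fun w => (Finset.univ.filter fun m => m ≤ i ∧ w m = true).card = rem z i)) =
    W p z / Pr p (fun w => cnt w = k) := by
  classical
  set Q : ℕ → ℝ := fun j =>
    if h : j < n then (if z ⟨j, h⟩ then p ⟨j, h⟩ else 1 - p ⟨j, h⟩) else 1 with hQ
  have hQi : ∀ i : Fin n, Q i.val = if z i then p i else 1 - p i := by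
    intro i; simp [hQ, i.isLt]
  -- equality of ≤-filters with <(j+1)-filters
  have elex : ∀ (i : Fin n) (v : Fin n → Bool),
      (Finset.univ.filter fun m => m ≤ i ∧ v m = true).card =
      (Finset.univ.filter fun m : Fin n => m.val < i.val + 1 ∧ v m = true).card := by
    intro i v
    congr 1
    apply Finset.filter_congr
    intro m _
    have hm : m ≤ i ↔ m.val < i.val + 1 := by rw [Fin.le_def]; omega
    rw [hm]
  have eltx : ∀ (i : Fin n) (v : Fin n → Bool),
      (Finset.univ.filter fun m => m < i ∧ v m = true).card =
      (Finset.univ.filter fun m : Fin n => m.val < i.val ∧ v m = true).card := by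
    intro i v
    congr 1
  have hden : ∀ i : Fin n,
      Pr p (fun w => (Finset.univ.filter fun m => m ≤ i ∧ w m = true).card = rem z i) =
      Cf p z (i.val + 1) := by
    intro i
    apply Pr_congr
    intro w
    unfold rem
    rw [elex i w, elex i z]
  have hterm : ∀ i : Fin n,
      (if z i = true then
        Pr p (fun w => (Finset.univ.filter fun m => m < i ∧ w m = true).card = rem z i - 1)
          * p i /
        Pr p (fun w => (Finset.univ.filter fun m => m ≤ i ∧ w m = true).card = rem z i)
      else
        Pr p (fun w => (Finset.univ.filter fun m => m < i ∧ w m = true).card = rem z i)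
          * (1 - p i) /
        Pr p (fun w => (Finset.univ.filter fun m => m ≤ i ∧ w m = true).card = rem z i)) =
      Cf p z i.val * Q i.val / Cf p z (i.val + 1) := by
    intro i
    rw [hQi i]
    by_cases hzi : z i = true
    · simp only [hzi, if_true]
      rw [hden i]
      congr 1
      congr 1
      apply Pr_congr
      intro w
      have hrem : rem z i =
          (Finset.univ.filter fun m : Fin n => m.val < i.val ∧ z m = true).card + 1 := by
        unfold rem
        rw [← eltx i z]
        have hset : (Finset.univ.filter fun m => m ≤ i ∧ z m = true) =
            insert i (Finset.univ.filter fun m => m < i ∧ z m = true) := by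
          ext m
          simp only [Finset.mem_filter, Finset.mem_univ, true_and, Finset.mem_insert]
          constructor
          · rintro ⟨hle, hm⟩
            rcases lt_or_eq_of_le hle with h | h
            · exact Or.inr ⟨h, hm⟩
            · exact Or.inl h
          · rintro (rfl | ⟨hlt, hm⟩)
            · exact ⟨le_refl _, hzi⟩
            · exact ⟨le_of_lt hlt, hm⟩
        rw [hset, Finset.card_insert_of_notMem (fun hmem => absurd (Finset.mem_filter.mp hmem).2.1 (lt_irrefl i))]
      rw [eltx i w, hrem]
      simp
    · simp only [hzi, Bool.false_eq_true, if_false]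
      rw [hden i]
      congr 1
      congr 1
      apply Pr_congr
      intro w
      have hrem : rem z i =
          (Finset.univ.filter fun m : Fin n => m.val < i.val ∧ z m = true).card := by
        unfold rem
        rw [← eltx i z]
        congr 1
        apply Finset.filter_congr
        intro m _
        constructor
        · rintro ⟨hle, hm⟩
          rcases lt_or_eq_of_le hle with h | h
          · exact ⟨h, hm⟩
          · exact absurd hm (by rw [h]; exact hzi)
        · rintro ⟨hlt, hm⟩
          exact ⟨le_of_lt hlt, hm⟩
      rw [eltx i w, hrem]
  have hCne : ∀ j ≤ n, Cf p z j ≠ 0 := fun j _ => ne_of_gt (Cf_pos p hp z j)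
  calc
    _ = ∏ i : Fin n, Cf p z i.val * Q i.val / Cf p z (i.val + 1) :=
      Finset.prod_congr rfl fun i _ => hterm i
    _ = ∏ j ∈ Finset.range n, (Cf p z j * Q j / Cf p z (j + 1)) :=
      Fin.prod_univ_eq_prod_range (fun j => Cf p z j * Q j / Cf p z (j + 1)) n
    _ = (∏ j ∈ Finset.range n, Q j) * Cf p z 0 / Cf p z n := telescope _ _ n hCne
    _ = W p z / Pr p (fun w => cnt w = k) := by
      rw [Cf_zero, Cf_top p z hz, mul_one]
      congr 1
      rw [← Fin.prod_univ_eq_prod_range]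
      unfold W
      exact Finset.prod_congr rfl fun i _ => hQi i
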